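/- arXiv:2601.19004 — 2 statements merged into one kernel-verified Lean document; each statement's English description precedes it below -/
import Mathlib

section
/- Asymptotic variance of the signed RESI equals 1 under the null (limit of the asymptotic variance). Let m ≥ 1, let ℓ ∈ ℝ^m be a row vector, and let f : ℝ^m → ℝ be continuously differentiable at θ ∈ ℝ^m with f(θ) > 0. Define the signed effect size g(θ*) := (ℓθ*)/sqrt(f(θ*)) for θ* near θ. If ℓθ = 0, then g is differentiable at θ with gradient ∇g(θ) = ℓᵀ/sqrt(f(θ)); consequently, for any m×m positive semidefinite matrix Σ satisfying ℓΣℓᵀ = f(θ), the asymptotic variance σ_S² := (∇g(θ))ᵀ Σ (∇g(θ)) equals 1. -/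
open Matrix

/-- Under the null `ℓθ = 0`, the signed effect size `g(θ*) = (ℓθ*)/sqrt(f(θ*))` is
differentiable at `θ` with gradient `ℓᵀ/sqrt(f(θ))`, so for any positive semidefinite
`Σ` with `ℓΣℓᵀ = f(θ)` the asymptotic variance `(∇g(θ))ᵀ Σ (∇g(θ))` equals `1`. -/
theorem signed_resi_null_asymptotic_variance_one
    {m : ℕ} (hm : 1 ≤ m) (ℓ : Fin m → ℝ)
    (f : (Fin m → ℝ) → ℝ) (θ : Fin m → ℝ)
    (hf : ContDiffAt ℝ 1 f θ) (hfθ : 0 < f θ)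
    (hnull : ℓ ⬝ᵥ θ = 0) :
    (∃ D : (Fin m → ℝ) →L[ℝ] ℝ,
      HasFDerivAt (fun t => (ℓ ⬝ᵥ t) / Real.sqrt (f t)) D θ ∧
      ∀ v, D v = (ℓ ⬝ᵥ v) / Real.sqrt (f θ)) ∧
    ∀ Sig : Matrix (Fin m) (Fin m) ℝ, Sig.PosSemidef →
      ℓ ⬝ᵥ Sig.mulVec ℓ = f θ →
      (fun i => ℓ i / Real.sqrt (f θ)) ⬝ᵥ
        Sig.mulVec (fun i => ℓ i / Real.sqrt (f θ)) = 1 := by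
  have hs0 : Real.sqrt (f θ) ≠ 0 := by positivity
  constructor
  · -- derivative of f
    have hF' := (hf.differentiableAt one_ne_zero).hasFDerivAt
    -- derivative of sqrt ∘ f
    have hsq : HasFDerivAt (fun t => Real.sqrt (f t))
        ((1 / (2 * Real.sqrt (f θ))) • fderiv ℝ f θ) θ := hF'.sqrt hfθ.ne'
    -- derivative of (sqrt (f t))⁻¹
    have hinv : HasFDerivAt (fun t => (Real.sqrt (f t))⁻¹)
        ((-((Real.sqrt (f θ)) ^ 2)⁻¹) • ((1 / (2 * Real.sqrt (f θ))) • fderiv ℝ f θ)) θ :=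
      (hasDerivAt_inv hs0).comp_hasFDerivAt θ hsq
    -- derivative of linear part
    have hL : HasFDerivAt (fun t : Fin m → ℝ => ℓ ⬝ᵥ t)
        (∑ i, ℓ i • ContinuousLinearMap.proj (R := ℝ) (φ := fun _ : Fin m => ℝ) i) θ := by
      simp only [dotProduct]
      exact HasFDerivAt.fun_sum fun i _ =>
        ((ContinuousLinearMap.proj (R := ℝ) (φ := fun _ : Fin m => ℝ) i).hasFDerivAt).const_mul (ℓ i)
    have hmul := hL.mul hinv
    rw [hnull, zero_smul, zero_add] at hmul
    refine ⟨_, hmul, fun v => ?_⟩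
    simp [dotProduct, div_eq_inv_mul, Finset.mul_sum]
  · intro Sig _ hvar
    have hℓ : (fun i => ℓ i / Real.sqrt (f θ)) = (Real.sqrt (f θ))⁻¹ • ℓ := by
      ext i; simp [div_eq_inv_mul]
    rw [hℓ, Matrix.mulVec_smul, dotProduct_smul, smul_dotProduct, hvar,
      smul_eq_mul, smul_eq_mul]
    rw [← mul_assoc, ← mul_inv]
    rw [Real.mul_self_sqrt hfθ.le]
    exact inv_mul_cancel₀ hfθ.ne'
end

section
/- Asymptotic equivalence of the F-statistic-based unsigned RESI estimator and the scaled estimator under the alternative. Fix integers m₁ ≥ 1 and m ≥ 1 and a real s > 0. Let (Tₙ²) be nonnegative real random variables with Tₙ²/n → s² in probability, and set Fₙ := Tₙ²/m₁. Define Ŝₙ^F := sqrt( max(0, (Fₙ·m₁·(n − m − 2) − m₁·(n − m)) / (n(n − m)) ) ) and S̃ₙ := sqrt(Tₙ²/n). Then √n(Ŝₙ^F − S̃ₙ) → 0 in probability (where terms are considered for n > m + 2). -/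
open MeasureTheory Filter Topology


lemma aux_sqrt_atTop : Tendsto (fun n : ℕ => Real.sqrt n) atTop atTop := by
  apply tendsto_atTop_atTop.mpr
  intro b
  obtain ⟨N, hN⟩ := exists_nat_ge (b ^ 2)
  refine ⟨N, fun n hn => ?_⟩
  have h1 : b ^ 2 ≤ (n : ℝ) := hN.trans (Nat.cast_le.mpr hn)
  calc b ≤ |b| := le_abs_self b
    _ = Real.sqrt (b ^ 2) := (Real.sqrt_sq_eq_abs b).symm
    _ ≤ Real.sqrt n := Real.sqrt_le_sqrt h1

lemma aux_sqrt_sub_le (u v : ℝ) (hu : 0 ≤ u) (hv : 0 < v) :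
    |Real.sqrt u - Real.sqrt v| ≤ |u - v| / Real.sqrt v := by
  rw [le_div_iff₀ (Real.sqrt_pos.mpr hv)]
  have h1 : |Real.sqrt u - Real.sqrt v| * (Real.sqrt u + Real.sqrt v) = |u - v| := by
    rw [← abs_of_nonneg (add_nonneg (Real.sqrt_nonneg u) (Real.sqrt_nonneg v)), ← abs_mul]
    congr 1
    have h2 : Real.sqrt u ^ 2 = u := Real.sq_sqrt hu
    have h3 : Real.sqrt v ^ 2 = v := Real.sq_sqrt hv.le
    nlinarith
  calc |Real.sqrt u - Real.sqrt v| * Real.sqrt v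
      ≤ |Real.sqrt u - Real.sqrt v| * (Real.sqrt u + Real.sqrt v) := by
        gcongr; exact le_add_of_nonneg_left (Real.sqrt_nonneg u)
    _ = |u - v| := h1

/-- Deterministic key estimate. -/
lemma aux_key (m₁ m : ℕ) (hm₁ : 1 ≤ m₁) (s : ℝ) (hs : 0 < s) (ε : ℝ) (hε : 0 < ε) :
    ∀ᶠ n : ℕ in atTop, ∀ x : ℝ, 0 ≤ x → |x - s ^ 2| ≤ s ^ 2 / 2 →
      |Real.sqrt n *
        (Real.sqrt (max 0
          ((x * n / (m₁ : ℝ) * (m₁ : ℝ) * ((n : ℝ) - m - 2)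
              - (m₁ : ℝ) * ((n : ℝ) - m))
            / ((n : ℝ) * ((n : ℝ) - m))))
          - Real.sqrt x)| ≤ ε := by
  have h1 : Tendsto (fun n : ℕ => s * Real.sqrt n) atTop atTop :=
    aux_sqrt_atTop.const_mul_atTop hs
  have hC : Tendsto (fun n : ℕ => (6 * s ^ 2 + m₁) * Real.sqrt 2 / (s * Real.sqrt n))
      atTop (𝓝 0) := tendsto_const_nhds.div_atTop h1
  have h2 : Tendsto (fun n : ℕ => (n : ℝ)) atTop atTop := tendsto_natCast_atTop_atTop
  filter_upwards [hC.eventually (eventually_le_nhds hε),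
    eventually_ge_atTop (2 * m + 4), h2.eventually_gt_atTop (4 * m₁ / s ^ 2)]
    with n hCn hn1 hn2 x hx hxs
  have hcast : (2 * m + 4 : ℝ) ≤ (n : ℝ) := by exact_mod_cast hn1
  have hm0 : (0 : ℝ) ≤ (m : ℝ) := Nat.cast_nonneg m
  have hn0 : (0 : ℝ) < (n : ℝ) := by linarith
  have hnm0 : (0 : ℝ) < (n : ℝ) - m := by linarith
  have hm₁0 : (0 : ℝ) < (m₁ : ℝ) := by exact_mod_cast hm₁
  obtain ⟨hxa, hxb⟩ := abs_le.mp hxs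
  have hxlo : s ^ 2 / 2 ≤ x := by linarith
  have hxhi : x ≤ 3 * s ^ 2 / 2 := by linarith
  have hx0 : 0 < x := lt_of_lt_of_le (by positivity) hxlo
  have h4 : 4 * (m₁ : ℝ) < (n : ℝ) * s ^ 2 := by
    rw [div_lt_iff₀ (by positivity : (0:ℝ) < s ^ 2)] at hn2
    linarith
  have h5 : (n : ℝ) ≤ 2 * ((n : ℝ) - m - 2) := by linarith
  have hA : (x * n / (m₁ : ℝ) * (m₁ : ℝ) * ((n : ℝ) - m - 2)
        - (m₁ : ℝ) * ((n : ℝ) - m)) / ((n : ℝ) * ((n : ℝ) - m))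
      = x * (((n : ℝ) - m - 2) / ((n : ℝ) - m)) - m₁ / n := by
    field_simp
  have hApos : 0 ≤ x * (((n : ℝ) - m - 2) / ((n : ℝ) - m)) - m₁ / n := by
    rw [sub_nonneg, mul_div_assoc', div_le_div_iff₀ hn0 hnm0]
    nlinarith [mul_pos hn0 hn0, mul_pos hx0 hn0]
  rw [hA, max_eq_right hApos]
  have hdiff : x * (((n : ℝ) - m - 2) / ((n : ℝ) - m)) - m₁ / n - x
      = -(2 * x / ((n : ℝ) - m) + m₁ / n) := by
    field_simp
    ring
  have habs : |x * (((n : ℝ) - m - 2) / ((n : ℝ) - m)) - m₁ / n - x|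
      = 2 * x / ((n : ℝ) - m) + m₁ / n := by
    rw [hdiff, abs_neg, abs_of_nonneg (by positivity)]
  have hstep := aux_sqrt_sub_le (x * (((n : ℝ) - m - 2) / ((n : ℝ) - m)) - m₁ / n) x hApos hx0
  rw [habs] at hstep
  have hq : 2 * x / ((n : ℝ) - m) + m₁ / n ≤ (6 * s ^ 2 + m₁) / n := by
    have h7 : 2 * x / ((n : ℝ) - m) ≤ 6 * s ^ 2 / n := by
      rw [div_le_div_iff₀ hnm0 hn0]
      nlinarith
    rw [add_div]
    linarith
  have hsqx : s / Real.sqrt 2 ≤ Real.sqrt x := by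
    have h6 : Real.sqrt (s ^ 2 / 2) ≤ Real.sqrt x := Real.sqrt_le_sqrt hxlo
    rwa [Real.sqrt_div (sq_nonneg s), Real.sqrt_sq hs.le] at h6
  have hs2 : (0 : ℝ) < s / Real.sqrt 2 := by positivity
  have hsn : (0 : ℝ) < Real.sqrt n := Real.sqrt_pos.mpr hn0
  calc |Real.sqrt n * (Real.sqrt (x * (((n : ℝ) - m - 2) / ((n : ℝ) - m)) - m₁ / n)
          - Real.sqrt x)|
      = Real.sqrt n * |Real.sqrt (x * (((n : ℝ) - m - 2) / ((n : ℝ) - m)) - m₁ / n)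
          - Real.sqrt x| := by
        rw [abs_mul, abs_of_nonneg (Real.sqrt_nonneg _)]
    _ ≤ Real.sqrt n * ((2 * x / ((n : ℝ) - m) + m₁ / n) / Real.sqrt x) := by
        exact mul_le_mul_of_nonneg_left hstep (Real.sqrt_nonneg _)
    _ ≤ Real.sqrt n * (((6 * s ^ 2 + m₁) / n) / (s / Real.sqrt 2)) := by
        gcongr
    _ = (6 * s ^ 2 + m₁) * Real.sqrt 2 / (s * Real.sqrt n) := by
        have h2 : Real.sqrt 2 ≠ 0 := by positivity
        field_simp
        linear_combination (1 : ℝ) *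
          (Real.mul_self_sqrt hn0.le)
    _ ≤ ε := hCn

/-- **Asymptotic equivalence of the F-statistic-based unsigned RESI estimator and the
scaled estimator under the alternative.** If `Tₙ²/n → s² > 0` in probability and
`Fₙ = Tₙ²/m₁`, then `√n(Ŝₙ^F − S̃ₙ) → 0` in probability, where
`Ŝₙ^F = sqrt(max(0, (Fₙm₁(n−m−2) − m₁(n−m))/(n(n−m))))` and `S̃ₙ = sqrt(Tₙ²/n)`. -/
theorem f_based_resi_asymp_equiv
    (m₁ m : ℕ) (hm₁ : 1 ≤ m₁) (hm : 1 ≤ m) (s : ℝ) (hs : 0 < s)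
    {Ω : Type*} [MeasurableSpace Ω] (P : Measure Ω) [IsProbabilityMeasure P]
    (T2 : ℕ → Ω → ℝ) (hmeas : ∀ n, Measurable (T2 n))
    (hnonneg : ∀ n ω, 0 ≤ T2 n ω)
    (hprob : ∀ ε > (0 : ℝ),
      Tendsto (fun n : ℕ => P {ω | ε < |T2 n ω / (n : ℝ) - s ^ 2|}) atTop (𝓝 0)) :
    ∀ ε > (0 : ℝ),
      Tendsto (fun n : ℕ => P {ω | ε <
          |Real.sqrt n *
            (Real.sqrt (max 0
              (((T2 n ω / (m₁ : ℝ)) * (m₁ : ℝ) * ((n : ℝ) - m - 2)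
                  - (m₁ : ℝ) * ((n : ℝ) - m))
                / ((n : ℝ) * ((n : ℝ) - m))))
              - Real.sqrt (T2 n ω / (n : ℝ)))|}) atTop (𝓝 0) := by
  intro ε hε
  have hkey := aux_key m₁ m hm₁ s hs ε hε
  have hδ := hprob (s ^ 2 / 2) (by positivity)
  apply tendsto_of_tendsto_of_tendsto_of_le_of_le' tendsto_const_nhds hδ
  · exact Eventually.of_forall fun n => zero_le
  · filter_upwards [hkey, eventually_ge_atTop 1] with n hn hn1
    apply measure_mono
    intro ω hω
    simp only [Set.mem_setOf_eq] at hω ⊢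
    by_contra hcon
    push_neg at hcon
    have hn0 : ((n : ℝ)) ≠ 0 := by
      have : n ≠ 0 := by omega
      exact_mod_cast this
    have hxn : (T2 n ω / (n : ℝ)) * (n : ℝ) = T2 n ω := div_mul_cancel₀ _ hn0
    have hx := hn (T2 n ω / (n : ℝ))
      (div_nonneg (hnonneg n ω) (Nat.cast_nonneg n)) hcon
    rw [hxn] at hx
    exact absurd hx (not_le.mpr hω)
end
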